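/- Let $1<p<N$, $0\le\mu<\bar\mu$, $A>0$ and $\alpha>p$. Then there exist constants $\delta,\epsilon\in(0,1)$ and $R_1>1$ depending only on $N,p,\mu,A,\alpha$ such that the function $v(x)=|x|^{-\gamma_2}(1-\delta|x|^{-\epsilon})$ is positive on $\{|x|>R_1\}$, belongs to $\mathcal{D}^{1,p}(B_{R_1}^c)$, and satisfies $-\Delta_p v-\frac{\mu}{|x|^p}v^{p-1}=g(x)v^{p-1}$ pointwise on $\{|x|>R_1\}$ for a function $g$ with $g(x)\ge A|x|^{-\alpha}$ for all $|x|>R_1$ and $g\in L^{N/p}(B_{R_1}^c)$. -/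

import Mathlib

open MeasureTheory

/-- The root equation `γ^(p-2)[(p-1)γ² - (N-p)γ] + μ = 0`. -/
def rootEq (N p μ γ : ℝ) : Prop :=
  γ ^ (p - 2) * ((p - 1) * γ ^ 2 - (N - p) * γ) + μ = 0

/-- The `p`-Laplacian `Δ_p v = div(|∇v|^(p-2) ∇v)`, written pointwise. -/
noncomputable def pLap (N : ℕ) (p : ℝ) (v : EuclideanSpace ℝ (Fin N) → ℝ)
    (x : EuclideanSpace ℝ (Fin N)) : ℝ :=
  ∑ i : Fin N,
    fderiv ℝ (fun y => (‖gradient v y‖ ^ (p - 2) • gradient v y) i) x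
      (EuclideanSpace.single i 1)


noncomputable def Hfun (p μ γ ε K s : ℝ) : ℝ :=
  (γ - (γ+ε)*s) ^ (p-2) * (K*(γ - (γ+ε)*s) + (p-1)*(γ+ε)*ε*s) - μ*(1-s)^(p-1)

noncomputable def Hfun' (p μ γ ε K s : ℝ) : ℝ :=
  ((p-2) * (γ - (γ+ε)*s) ^ (p-2-1) * (-(γ+ε))) * (K*(γ - (γ+ε)*s) + (p-1)*(γ+ε)*ε*s)
  + (γ - (γ+ε)*s) ^ (p-2) * (K*(-(γ+ε)) + (p-1)*(γ+ε)*ε)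
  - μ * ((p-1)*(1-s)^(p-1-1)*(-1))

lemma Hfun_hasDerivAt (p μ γ ε K s : ℝ) (h1 : γ - (γ+ε)*s ≠ 0) (h2 : (1:ℝ) - s ≠ 0) :
    HasDerivAt (fun s => Hfun p μ γ ε K s) (Hfun' p μ γ ε K s) s := by
  have hψ : HasDerivAt (fun s : ℝ => γ - (γ+ε)*s) (-(γ+ε)) s := by
    simpa using ((hasDerivAt_id s).const_mul (γ+ε)).const_sub γ
  have hP : HasDerivAt (fun s : ℝ => (γ-(γ+ε)*s)^(p-2))
      ((p-2)*(γ-(γ+ε)*s)^(p-2-1) * (-(γ+ε))) s := by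
    have := (Real.hasDerivAt_rpow_const (p := p-2) (Or.inl h1)).comp s hψ
    simpa [Function.comp_def, mul_comm, mul_assoc, mul_left_comm] using this
  have hQ : HasDerivAt (fun s : ℝ => K*(γ-(γ+ε)*s) + (p-1)*(γ+ε)*ε*s)
      (K*(-(γ+ε)) + (p-1)*(γ+ε)*ε) s := by
    have h1 : HasDerivAt (fun s : ℝ => K*(γ-(γ+ε)*s)) (K*(-(γ+ε))) s := hψ.const_mul K
    have h2 : HasDerivAt (fun s : ℝ => (p-1)*(γ+ε)*ε*s) ((p-1)*(γ+ε)*ε) s := by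
      simpa using (hasDerivAt_id s).const_mul ((p-1)*(γ+ε)*ε)
    exact h1.add h2
  have hs1 : HasDerivAt (fun s : ℝ => (1:ℝ) - s) (-1) s := by
    simpa using (hasDerivAt_id s).const_sub (1:ℝ)
  have hR : HasDerivAt (fun s : ℝ => (1-s)^(p-1)) ((p-1)*(1-s)^(p-1-1)*(-1)) s := by
    have := (Real.hasDerivAt_rpow_const (p := p-1) (Or.inl h2)).comp s hs1
    simpa [Function.comp_def] using this
  exact (hP.mul hQ).sub (hR.const_mul μ)

lemma Hfun_bounds (p μ γ ε K : ℝ) (hp : 1 < p) (hγ : 0 < γ) (hε : 0 < ε)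
    (hK0 : 0 ≤ K) (hKγ : K < γ) (hμ : μ = γ ^ (p-1) * K) :
    ∃ δ κ : ℝ, 0 < δ ∧ δ ≤ 1/2 ∧ (γ+ε)*δ ≤ γ/2 ∧ 0 < κ ∧
      ∀ s : ℝ, 0 < s → s ≤ δ → κ * s ≤ Hfun p μ γ ε K s ∧ Hfun p μ γ ε K s ≤ 3 * κ * s := by
  have hγε : 0 < γ + ε := by linarith
  have e2 : γ ^ (p-1) = γ ^ (p-2) * γ := by
    rw [← Real.rpow_add_one hγ.ne' (p-2)]; ring_nf
  have e1 : γ ^ (p-2) = γ ^ (p-2-1) * γ := by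
    rw [← Real.rpow_add_one hγ.ne' (p-2-1)]; ring_nf
  have hγp : 0 < γ ^ (p-2) := Real.rpow_pos_of_pos hγ _
  set κ₀ := Hfun' p μ γ ε K 0 with hκ₀def
  have hκ₀ : κ₀ = γ ^ (p-2) * ((p-1)*ε*(γ+ε-K)) := by
    rw [hκ₀def]
    unfold Hfun'
    rw [hμ]
    simp only [mul_zero, sub_zero, Real.one_rpow]
    rw [e2, e1]
    ring
  have hκ₀pos : 0 < κ₀ := by
    rw [hκ₀]
    exact mul_pos hγp (mul_pos (mul_pos (by linarith) hε) (by linarith))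
  have hH0 : Hfun p μ γ ε K 0 = 0 := by
    unfold Hfun
    rw [hμ]
    simp only [mul_zero, sub_zero, Real.one_rpow, add_zero, mul_one]
    rw [e2]; ring
  -- continuity of Hfun' at 0
  have hcont : ContinuousAt (fun s => Hfun' p μ γ ε K s) 0 := by
    have hψc : Continuous (fun s : ℝ => γ - (γ+ε)*s) := by fun_prop
    have hb : γ - (γ+ε)*(0:ℝ) ≠ 0 := by simpa using hγ.ne'
    have c1 : ContinuousAt (fun s : ℝ => (γ-(γ+ε)*s) ^ (p-2-1)) 0 :=
      hψc.continuousAt.rpow_const (Or.inl hb)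
    have c2 : ContinuousAt (fun s : ℝ => (γ-(γ+ε)*s) ^ (p-2)) 0 :=
      hψc.continuousAt.rpow_const (Or.inl hb)
    have c3 : ContinuousAt (fun s : ℝ => (1-s) ^ (p-1-1)) 0 := by
      have : Continuous (fun s : ℝ => 1 - s) := by fun_prop
      exact this.continuousAt.rpow_const (Or.inl (by norm_num))
    unfold Hfun'
    apply ContinuousAt.sub
    · apply ContinuousAt.add
      · apply ContinuousAt.mul
        · exact (continuousAt_const.mul c1).mul continuousAt_const
        · fun_prop
      · exact c2.mul (by fun_prop)
    · exact continuousAt_const.mul ((continuousAt_const.mul c3).mul continuousAt_const)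
  obtain ⟨δ₀, hδ₀pos, hδ₀⟩ := Metric.continuousAt_iff.1 hcont (κ₀/2) (by positivity)
  refine ⟨min (δ₀/2) (min (1/2) (γ/(2*(γ+ε)))), κ₀/2, ?_, ?_, ?_, by positivity, ?_⟩
  · positivity
  · exact le_trans (min_le_right _ _) (min_le_left _ _)
  · have h : min (δ₀/2) (min (1/2) (γ/(2*(γ+ε)))) ≤ γ/(2*(γ+ε)) :=
      le_trans (min_le_right _ _) (min_le_right (1/2) (γ/(2*(γ+ε))))
    calc (γ+ε) * min (δ₀/2) (min (1/2) (γ/(2*(γ+ε)))) ≤ (γ+ε) * (γ/(2*(γ+ε))) :=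
          mul_le_mul_of_nonneg_left h hγε.le
      _ = γ/2 := by field_simp
  intro s hs0 hsδ
  set δ := min (δ₀/2) (min (1/2) (γ/(2*(γ+ε)))) with hδdef
  have hδ2 : δ ≤ 1/2 := le_trans (min_le_right _ _) (min_le_left _ _)
  have hδ3 : (γ+ε) * δ ≤ γ/2 := by
    have h : δ ≤ γ/(2*(γ+ε)) := le_trans (min_le_right _ _) (min_le_right (1/2) (γ/(2*(γ+ε))))
    calc (γ+ε) * δ ≤ (γ+ε) * (γ/(2*(γ+ε))) := mul_le_mul_of_nonneg_left h hγε.le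
      _ = γ/2 := by field_simp
  -- on [0, s] derivatives exist
  have hderiv : ∀ c ∈ Set.Icc (0:ℝ) s, HasDerivAt (fun s => Hfun p μ γ ε K s) (Hfun' p μ γ ε K c) c := by
    intro c hc
    have hc1 : γ - (γ+ε)*c ≠ 0 := by
      have : (γ+ε)*c ≤ (γ+ε)*δ := mul_le_mul_of_nonneg_left (le_trans hc.2 hsδ) hγε.le
      have : (γ+ε)*c ≤ γ/2 := le_trans this hδ3
      have := hc.1
      nlinarith
    have hc2 : (1:ℝ) - c ≠ 0 := by
      have : c ≤ 1/2 := le_trans (le_trans hc.2 hsδ) hδ2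
      nlinarith
    exact Hfun_hasDerivAt p μ γ ε K c hc1 hc2
  have hcont_on : ContinuousOn (fun s => Hfun p μ γ ε K s) (Set.Icc 0 s) :=
    fun c hc => ((hderiv c hc).continuousAt).continuousWithinAt
  obtain ⟨c, hcmem, hceq⟩ := exists_hasDerivAt_eq_slope (fun s => Hfun p μ γ ε K s)
    (fun c => Hfun' p μ γ ε K c) hs0 hcont_on
    (fun c hc => hderiv c (Set.mem_Icc.2 ⟨hc.1.le, hc.2.le⟩))
  have hHs : Hfun p μ γ ε K s = Hfun' p μ γ ε K c * s := by
    rw [hceq, hH0]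
    rw [sub_zero, sub_zero]
    have := hs0.ne'
    field_simp
  have hcnear : dist (Hfun' p μ γ ε K c) (Hfun' p μ γ ε K 0) < κ₀/2 := by
    apply hδ₀
    rw [Real.dist_eq, sub_zero]
    have h1 : c < s := hcmem.2
    have h2 : 0 < c := hcmem.1
    have : c < δ₀/2 := lt_of_lt_of_le (lt_of_lt_of_le h1 hsδ) (min_le_left _ _)
    rw [abs_of_pos h2]; linarith
  rw [Real.dist_eq, ← hκ₀def] at hcnear
  have habs := abs_lt.1 hcnear
  constructor
  · rw [hHs]
    have : κ₀/2 ≤ Hfun' p μ γ ε K c := by linarith [habs.1]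
    exact mul_le_mul_of_nonneg_right this hs0.le
  · rw [hHs]
    have : Hfun' p μ γ ε K c ≤ 3*(κ₀/2) := by linarith [habs.2]
    calc Hfun' p μ γ ε K c * s ≤ 3*(κ₀/2) * s := mul_le_mul_of_nonneg_right this hs0.le
      _ = 3*(κ₀/2)*s := by ring


lemma memLp_of_bound {n : ℕ} (S : Set (EuclideanSpace ℝ (Fin n))) (hS : MeasurableSet S)
    (f : EuclideanSpace ℝ (Fin n) → ℝ) (hf : AEStronglyMeasurable f (volume.restrict S))
    (q s C : ℝ) (hq : 0 < q) (hs : (n:ℝ) < s * q)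
    (hb : ∀ x ∈ S, |f x| ≤ C * (1 + ‖x‖) ^ (-s)) :
    MemLp f (ENNReal.ofReal q) (volume.restrict S) := by
  have hq0 : ENNReal.ofReal q ≠ 0 := by simp [hq, ENNReal.ofReal_eq_zero, not_le]
  have hqtop : ENNReal.ofReal q ≠ ⊤ := ENNReal.ofReal_ne_top
  have h1 : Integrable (fun x : EuclideanSpace ℝ (Fin n) => (1+‖x‖) ^ (-(s*q))) volume :=
    integrable_one_add_norm (by rw [finrank_euclideanSpace_fin]; exact hs)
  have basemeas : Measurable (fun x : EuclideanSpace ℝ (Fin n) => (1+‖x‖) ^ (-s)) := by fun_prop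
  have h2 : MemLp (fun x : EuclideanSpace ℝ (Fin n) => (1+‖x‖) ^ (-s))
      (ENNReal.ofReal q) volume := by
    apply (memLp_norm_rpow_iff (q := ENNReal.ofReal q) basemeas.aestronglyMeasurable hq0 hqtop).1
    have e : (fun x : EuclideanSpace ℝ (Fin n) =>
        ‖(1+‖x‖) ^ (-s)‖ ^ (ENNReal.ofReal q).toReal) =
        fun x : EuclideanSpace ℝ (Fin n) => (1+‖x‖) ^ (-(s*q)) := by
      funext x
      have h1x : (0:ℝ) < 1 + ‖x‖ := by positivity
      rw [Real.norm_eq_abs, abs_of_nonneg (Real.rpow_nonneg h1x.le _),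
        ENNReal.toReal_ofReal hq.le, ← Real.rpow_mul h1x.le]
      ring_nf
    rw [e, ENNReal.div_self hq0 hqtop, memLp_one_iff_integrable]
    exact h1
  have h3 : MemLp (fun x : EuclideanSpace ℝ (Fin n) => C * (1+‖x‖) ^ (-s))
      (ENNReal.ofReal q) (volume.restrict S) :=
    (h2.const_mul C).mono_measure Measure.restrict_le_self
  apply h3.mono' hf
  rw [ae_restrict_iff' hS]
  exact ae_of_all _ fun x hx => by simpa [Real.norm_eq_abs] using hb x hx


lemma sq_rpow (r c : ℝ) (hr : 0 ≤ r) : (r^2 : ℝ) ^ c = r ^ (2*c) := by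
  rw [← Real.rpow_natCast r 2, ← Real.rpow_mul hr]
  norm_num

lemma rpow_merge (r a b c : ℝ) (hr : 0 < r) (h : a + b = c) : r^a * r^b = r^c := by
  rw [← Real.rpow_add hr, h]

noncomputable def Phi (γ δ ε t : ℝ) : ℝ :=
  γ * t ^ (-(γ/2)-1) - δ*(γ+ε) * t ^ (-((γ+ε)/2)-1)

noncomputable def Phi' (γ δ ε t : ℝ) : ℝ :=
  γ * ((-(γ/2)-1) * t ^ (-(γ/2)-1-1)) - δ*(γ+ε) * ((-((γ+ε)/2)-1) * t ^ (-((γ+ε)/2)-1-1))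

noncomputable def hh (p γ δ ε t : ℝ) : ℝ := -(Phi γ δ ε t ^ (p-1) * t ^ ((p-2)/2))

noncomputable def hh' (p γ δ ε t : ℝ) : ℝ :=
  -(((p-1) * Phi γ δ ε t ^ (p-1-1) * Phi' γ δ ε t) * t ^ ((p-2)/2)
    + Phi γ δ ε t ^ (p-1) * (((p-2)/2) * t ^ ((p-2)/2-1)))

lemma Phi_hasDerivAt (γ δ ε t : ℝ) (ht : t ≠ 0) :
    HasDerivAt (Phi γ δ ε) (Phi' γ δ ε t) t := by
  unfold Phi Phi'
  exact ((Real.hasDerivAt_rpow_const (Or.inl ht)).const_mul γ).sub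
    ((Real.hasDerivAt_rpow_const (Or.inl ht)).const_mul (δ*(γ+ε)))

lemma Phi_pos (γ δ ε t : ℝ) (h1t : 1 ≤ t) (hδ : 0 ≤ δ) (hδγ : δ*(γ+ε) ≤ γ/2)
    (hγ : 0 < γ) (hε : 0 < ε) : 0 < Phi γ δ ε t := by
  have ht0 : 0 < t := lt_of_lt_of_le one_pos h1t
  have h1 : t ^ (-((γ+ε)/2)-1) ≤ t ^ (-(γ/2)-1) :=
    Real.rpow_le_rpow_of_exponent_le h1t (by linarith)
  have h2 : 0 < t ^ (-(γ/2)-1) := Real.rpow_pos_of_pos ht0 _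
  have h3 : 0 ≤ t ^ (-((γ+ε)/2)-1) := (Real.rpow_pos_of_pos ht0 _).le
  have h4 : δ*(γ+ε) * t ^ (-((γ+ε)/2)-1) ≤ (γ/2) * t ^ (-(γ/2)-1) := by
    calc δ*(γ+ε) * t ^ (-((γ+ε)/2)-1) ≤ δ*(γ+ε) * t ^ (-(γ/2)-1) := by
          exact mul_le_mul_of_nonneg_left h1 (by positivity)
      _ ≤ (γ/2) * t ^ (-(γ/2)-1) := mul_le_mul_of_nonneg_right hδγ h2.le
  unfold Phi
  nlinarith

lemma hh_hasDerivAt (p γ δ ε t : ℝ) (ht : t ≠ 0) (hΦ : Phi γ δ ε t ≠ 0) :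
    HasDerivAt (hh p γ δ ε) (hh' p γ δ ε t) t := by
  have h1 : HasDerivAt (fun t => Phi γ δ ε t ^ (p-1))
      ((p-1) * Phi γ δ ε t ^ (p-1-1) * Phi' γ δ ε t) t := by
    have := (Real.hasDerivAt_rpow_const (p := p-1) (Or.inl hΦ)).comp t
      (Phi_hasDerivAt γ δ ε t ht)
    simpa [Function.comp_def, mul_assoc] using this
  have h2 : HasDerivAt (fun t : ℝ => t ^ ((p-2)/2)) (((p-2)/2) * t ^ ((p-2)/2-1)) t :=
    Real.hasDerivAt_rpow_const (Or.inl ht)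
  have := (h1.mul h2).neg
  unfold hh hh'
  exact this

lemma radial_eq (γ δ ε : ℝ) (y : EuclideanSpace ℝ (Fin N)) (hy : 0 < ‖y‖) :
    ‖y‖ ^ (-γ) * (1 - δ * ‖y‖ ^ (-ε)) =
      (‖y‖^2) ^ (-(γ/2)) - δ * (‖y‖^2) ^ (-((γ+ε)/2)) := by
  rw [sq_rpow _ _ hy.le, sq_rpow _ _ hy.le]
  rw [show 2*(-(γ/2)) = -γ by ring, show 2*(-((γ+ε)/2)) = -γ + -ε by ring,
    Real.rpow_add hy]
  ring

lemma gradient_radial (γ δ ε : ℝ) (y : EuclideanSpace ℝ (Fin N)) (hy : 1 < ‖y‖) :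
    HasGradientAt (fun y : EuclideanSpace ℝ (Fin N) => ‖y‖ ^ (-γ) * (1 - δ * ‖y‖ ^ (-ε)))
      ((-(Phi γ δ ε (‖y‖^2) / 2)) • (2 • y)) y := by
  have hy0 : 0 < ‖y‖ := lt_trans one_pos hy
  have ht : (0:ℝ) < ‖y‖^2 := by positivity
  have hq : HasFDerivAt (fun y : EuclideanSpace ℝ (Fin N) => ‖y‖^2)
      (2 • (innerSL ℝ y)) y := (hasStrictFDerivAt_norm_sq y).hasFDerivAt
  have hf : HasDerivAt (fun t : ℝ => t ^ (-(γ/2)) - δ * t ^ (-((γ+ε)/2)))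
      (-(Phi γ δ ε (‖y‖^2)) / 2) (‖y‖^2) := by
    have h1 : HasDerivAt (fun t : ℝ => t ^ (-(γ/2)) - δ * t ^ (-((γ+ε)/2)))
        ((-(γ/2)) * (‖y‖^2) ^ (-(γ/2)-1) - δ * ((-((γ+ε)/2)) * (‖y‖^2) ^ (-((γ+ε)/2)-1)))
        (‖y‖^2) :=
      (Real.hasDerivAt_rpow_const (Or.inl ht.ne')).sub
        ((Real.hasDerivAt_rpow_const (Or.inl ht.ne')).const_mul δ)
    convert h1 using 1
    unfold Phi
    ring
  have hcomp : HasFDerivAt (fun z : EuclideanSpace ℝ (Fin N) =>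
      (‖z‖^2 : ℝ) ^ (-(γ/2)) - δ * (‖z‖^2) ^ (-((γ+ε)/2)))
      ((-(Phi γ δ ε (‖y‖^2)) / 2) • (2 • (innerSL ℝ y))) y := by
    have := hf.comp_hasFDerivAt y hq
    simpa [Function.comp_def] using this
  have hgrad : HasGradientAt (fun z : EuclideanSpace ℝ (Fin N) =>
      (‖z‖^2 : ℝ) ^ (-(γ/2)) - δ * (‖z‖^2) ^ (-((γ+ε)/2)))
      ((-(Phi γ δ ε (‖y‖^2) / 2)) • (2 • y)) y := by
    rw [hasGradientAt_iff_hasFDerivAt]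
    refine hcomp.congr_fderiv ?_
    apply ContinuousLinearMap.ext
    intro z
    simp [InnerProductSpace.toDual_apply_apply, real_inner_smul_left, inner_smul_left,
      ContinuousLinearMap.smul_apply, innerSL_apply_apply]
    ring
  apply hgrad.congr_of_eventuallyEq
  have hU : IsOpen {z : EuclideanSpace ℝ (Fin N) | 1 < ‖z‖} :=
    isOpen_lt continuous_const continuous_norm
  filter_upwards [hU.mem_nhds hy] with z hz
  exact radial_eq γ δ ε z (lt_trans one_pos hz)

lemma gradient_radial_eq (γ δ ε : ℝ) (y : EuclideanSpace ℝ (Fin N)) (hy : 1 < ‖y‖) :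
    gradient (fun y : EuclideanSpace ℝ (Fin N) => ‖y‖ ^ (-γ) * (1 - δ * ‖y‖ ^ (-ε))) y
      = (-(Phi γ δ ε (‖y‖^2))) • y := by
  rw [(gradient_radial γ δ ε y hy).gradient]
  module

lemma Wfield_eq (p γ δ ε : ℝ) (hγ : 0 < γ) (hε : 0 < ε) (hδ : 0 ≤ δ) (hδγ : δ*(γ+ε) ≤ γ/2)
    (y : EuclideanSpace ℝ (Fin N)) (hy : 1 < ‖y‖) :
    ‖gradient (fun y : EuclideanSpace ℝ (Fin N) => ‖y‖ ^ (-γ) * (1 - δ * ‖y‖ ^ (-ε))) y‖ ^ (p-2)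
        • gradient (fun y : EuclideanSpace ℝ (Fin N) => ‖y‖ ^ (-γ) * (1 - δ * ‖y‖ ^ (-ε))) y
      = hh p γ δ ε (‖y‖^2) • y := by
  have hy0 : 0 < ‖y‖ := lt_trans one_pos hy
  have h1t : (1:ℝ) ≤ ‖y‖^2 := by nlinarith
  have hΦ : 0 < Phi γ δ ε (‖y‖^2) := Phi_pos γ δ ε _ h1t hδ hδγ hγ hε
  rw [gradient_radial_eq γ δ ε y hy]
  rw [norm_smul, Real.norm_eq_abs, abs_neg, abs_of_pos hΦ]
  rw [Real.mul_rpow hΦ.le (norm_nonneg y)]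
  have h2 : ‖y‖ ^ (p-2) = (‖y‖^2 : ℝ) ^ ((p-2)/2) := by
    rw [sq_rpow _ _ hy0.le, show 2*((p-2)/2) = p-2 by ring]
  rw [h2, smul_smul]
  congr 1
  have h3 : Phi γ δ ε (‖y‖^2) ^ (p-2) * Phi γ δ ε (‖y‖^2) = Phi γ δ ε (‖y‖^2) ^ (p-1) := by
    rw [← Real.rpow_add_one hΦ.ne' (p-2), show p-2+1 = p-1 by ring]
  unfold hh
  rw [← h3]
  ring

lemma pLap_radial (N : ℕ) (p γ δ ε : ℝ) (hγ : 0 < γ) (hε : 0 < ε) (hδ : 0 ≤ δ)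
    (hδγ : δ*(γ+ε) ≤ γ/2) (x : EuclideanSpace ℝ (Fin N)) (hx : 1 < ‖x‖) :
    pLap N p (fun y : EuclideanSpace ℝ (Fin N) => ‖y‖ ^ (-γ) * (1 - δ * ‖y‖ ^ (-ε))) x
      = N * hh p γ δ ε (‖x‖^2) + 2*‖x‖^2 * hh' p γ δ ε (‖x‖^2) := by
  have hx0 : 0 < ‖x‖ := lt_trans one_pos hx
  have ht : (0:ℝ) < ‖x‖^2 := by positivity
  have h1t : (1:ℝ) ≤ ‖x‖^2 := by nlinarith
  have hΦ : 0 < Phi γ δ ε (‖x‖^2) := Phi_pos γ δ ε _ h1t hδ hδγ hγ hε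
  have hU : IsOpen {z : EuclideanSpace ℝ (Fin N) | 1 < ‖z‖} :=
    isOpen_lt continuous_const continuous_norm
  have hq : HasFDerivAt (fun y : EuclideanSpace ℝ (Fin N) => ‖y‖^2)
      (2 • (innerSL ℝ x)) x := (hasStrictFDerivAt_norm_sq x).hasFDerivAt
  have hev : ∀ i : Fin N,
      (fun y : EuclideanSpace ℝ (Fin N) =>
        (‖gradient (fun y : EuclideanSpace ℝ (Fin N) => ‖y‖ ^ (-γ) * (1 - δ * ‖y‖ ^ (-ε))) y‖ ^ (p-2)
          • gradient (fun y : EuclideanSpace ℝ (Fin N) => ‖y‖ ^ (-γ) * (1 - δ * ‖y‖ ^ (-ε))) y) i)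
      =ᶠ[nhds x] (fun y : EuclideanSpace ℝ (Fin N) => hh p γ δ ε (‖y‖^2) * y i) := by
    intro i
    filter_upwards [hU.mem_nhds hx] with z hz
    rw [Wfield_eq p γ δ ε hγ hε hδ hδγ z hz]
    simp [PiLp.smul_apply, smul_eq_mul]
  have hder : ∀ i : Fin N,
      HasFDerivAt (fun y : EuclideanSpace ℝ (Fin N) => hh p γ δ ε (‖y‖^2) * y i)
        ((hh p γ δ ε (‖x‖^2)) • (EuclideanSpace.proj i : EuclideanSpace ℝ (Fin N) →L[ℝ] ℝ)
          + (x i) • (hh' p γ δ ε (‖x‖^2) • (2 • (innerSL ℝ x)))) x := by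
    intro i
    have h1 : HasFDerivAt (fun y : EuclideanSpace ℝ (Fin N) => hh p γ δ ε (‖y‖^2))
        (hh' p γ δ ε (‖x‖^2) • (2 • (innerSL ℝ x))) x := by
      have := (hh_hasDerivAt p γ δ ε (‖x‖^2) ht.ne' hΦ.ne').comp_hasFDerivAt x hq
      simpa [Function.comp_def] using this
    have h2 : HasFDerivAt (fun y : EuclideanSpace ℝ (Fin N) => y i)
        (EuclideanSpace.proj i : EuclideanSpace ℝ (Fin N) →L[ℝ] ℝ) x :=
      (EuclideanSpace.proj i : EuclideanSpace ℝ (Fin N) →L[ℝ] ℝ).hasFDerivAt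
    exact h1.mul h2
  unfold pLap
  have hterm : ∀ i : Fin N,
      fderiv ℝ (fun y : EuclideanSpace ℝ (Fin N) =>
        (‖gradient (fun y : EuclideanSpace ℝ (Fin N) => ‖y‖ ^ (-γ) * (1 - δ * ‖y‖ ^ (-ε))) y‖ ^ (p-2)
          • gradient (fun y : EuclideanSpace ℝ (Fin N) => ‖y‖ ^ (-γ) * (1 - δ * ‖y‖ ^ (-ε))) y) i) x
        (EuclideanSpace.single i 1)
      = hh p γ δ ε (‖x‖^2) + hh' p γ δ ε (‖x‖^2) * (2 * (x i * x i)) := by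
    intro i
    rw [Filter.EventuallyEq.fderiv_eq (hev i), (hder i).fderiv]
    simp [ContinuousLinearMap.add_apply, ContinuousLinearMap.smul_apply,
      PiLp.proj_apply, EuclideanSpace.single_apply, innerSL_apply_apply,
      EuclideanSpace.inner_single_right, smul_eq_mul]
    ring
  rw [Finset.sum_congr rfl (fun i _ => hterm i)]
  rw [Finset.sum_add_distrib, Finset.sum_const, Finset.card_univ, Fintype.card_fin]
  have hsum : ∑ i : Fin N, x i * x i = ‖x‖^2 := by
    rw [EuclideanSpace.norm_eq, Real.sq_sqrt (by positivity)]
    congr 1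
    funext i
    rw [Real.norm_eq_abs, sq_abs, sq]
  have : ∑ i : Fin N, hh' p γ δ ε (‖x‖^2) * (2 * (x i * x i))
      = 2*‖x‖^2 * hh' p γ δ ε (‖x‖^2) := by
    rw [← Finset.mul_sum, ← Finset.mul_sum, hsum]
    ring
  rw [this]
  push_cast
  ring

lemma main_identity (N : ℕ) (p μ γ ε K δ r : ℝ) (hp : 1 < p) (hγ : 0 < γ) (hε : 0 < ε)
    (hδ0 : 0 < δ) (hδγ : δ*(γ+ε) ≤ γ/2) (hδ2 : δ ≤ 1/2)
    (hK : K = N - p - (p-1)*γ) (hr : 1 < r) :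
    -(N * hh p γ δ ε (r^2) + 2*r^2 * hh' p γ δ ε (r^2))
      - μ / r^p * (r^(-γ)*(1 - δ*r^(-ε)))^(p-1)
    = (r^(-p) * Hfun p μ γ ε K (δ*r^(-ε)) / (1 - δ*r^(-ε))^(p-1))
        * (r^(-γ)*(1 - δ*r^(-ε)))^(p-1) := by
  have hr0 : 0 < r := lt_trans one_pos hr
  set s := δ*r^(-ε) with hsdef
  have hrε : r^(-ε) < 1 := Real.rpow_lt_one_of_one_lt_of_neg hr (by linarith)
  have hrε0 : 0 < r^(-ε) := Real.rpow_pos_of_pos hr0 _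
  have hs0 : 0 < s := by rw [hsdef]; positivity
  have hsδ : s < δ := by rw [hsdef]; nlinarith
  have hψ : 0 < γ - (γ+ε)*s := by nlinarith
  have hw : 0 < 1 - s := by nlinarith
  have hwp : (1-s)^(p-1) ≠ 0 := (Real.rpow_pos_of_pos hw _).ne'
  have hΦ : Phi γ δ ε (r^2) = r^(-γ-2) * (γ - (γ+ε)*s) := by
    unfold Phi
    rw [sq_rpow _ _ hr0.le, sq_rpow _ _ hr0.le,
      show 2*(-(γ/2)-1) = -γ-2 by ring,
      show 2*(-((γ+ε)/2)-1) = (-ε) + (-γ-2) by ring,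
      Real.rpow_add hr0]
    rw [hsdef]; ring
  have hΦp1 : Phi γ δ ε (r^2) ^ (p-1) = r^((-γ-2)*(p-1)) * (γ - (γ+ε)*s)^(p-1) := by
    rw [hΦ, Real.mul_rpow (Real.rpow_nonneg hr0.le _) hψ.le, ← Real.rpow_mul hr0.le]
  have hΦp2 : Phi γ δ ε (r^2) ^ (p-1-1) = r^((-γ-2)*(p-2)) * (γ - (γ+ε)*s)^(p-2) := by
    rw [show p-1-1 = p-2 by ring, hΦ, Real.mul_rpow (Real.rpow_nonneg hr0.le _) hψ.le,
      ← Real.rpow_mul hr0.le]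
  have hΦ' : Phi' γ δ ε (r^2)
      = r^(-γ-4) * ((γ+ε)*((γ+ε+2)/2)*s - γ*((γ+2)/2)) := by
    unfold Phi'
    rw [sq_rpow _ _ hr0.le, sq_rpow _ _ hr0.le,
      show 2*(-(γ/2)-1-1) = -γ-4 by ring,
      show 2*(-((γ+ε)/2)-1-1) = (-ε) + (-γ-4) by ring,
      Real.rpow_add hr0]
    rw [hsdef]; ring
  have ht1 : ((r:ℝ)^2) ^ ((p-2)/2) = r^(p-2) := by
    rw [sq_rpow _ _ hr0.le, show 2*((p-2)/2) = p-2 by ring]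
  have ht2 : ((r:ℝ)^2) ^ ((p-2)/2-1) = r^(p-4) := by
    rw [sq_rpow _ _ hr0.le, show 2*((p-2)/2-1) = p-4 by ring]
  have hr2 : ((r:ℝ)^2) = r^((2:ℝ)) := by
    rw [← Real.rpow_natCast r 2]; norm_num
  have hhh : hh p γ δ ε (r^2) = -(r^(-p - γ*(p-1)) * (γ - (γ+ε)*s)^(p-1)) := by
    unfold hh
    rw [hΦp1, ht1]
    have m := rpow_merge r ((-γ-2)*(p-1)) (p-2) (-p - γ*(p-1)) hr0 (by ring)
    linear_combination (-(γ - (γ+ε)*s)^(p-1)) * m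
  have h2r2 : 2*r^2*hh' p γ δ ε (r^2)
      = -(r^(-p - γ*(p-1)) * ((p-1)*(γ - (γ+ε)*s)^(p-2)*((γ+ε)*(γ+ε+2)*s - γ*(γ+2))
          + (p-2)*(γ - (γ+ε)*s)^(p-1))) := by
    unfold hh'
    rw [hΦp1, hΦp2, hΦ', ht1, ht2, hr2]
    have m1 : r^((2:ℝ)) * r^((-γ-2)*(p-2)) * r^(-γ-4) * r^(p-2) = r^(-p - γ*(p-1)) := by
      rw [← Real.rpow_add hr0, ← Real.rpow_add hr0, ← Real.rpow_add hr0]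
      congr 1; ring
    have m2 : r^((2:ℝ)) * r^((-γ-2)*(p-1)) * r^(p-4) = r^(-p - γ*(p-1)) := by
      rw [← Real.rpow_add hr0, ← Real.rpow_add hr0]
      congr 1; ring
    linear_combination ((-2)*(p-1)*(γ - (γ+ε)*s)^(p-2)*((γ+ε)*((γ+ε+2)/2)*s - γ*((γ+2)/2))) * m1
      + (-(p-2)*(γ - (γ+ε)*s)^(p-1)) * m2
  have hv : (r^(-γ)*(1 - s))^(p-1) = r^((-γ)*(p-1)) * (1-s)^(p-1) := by
    rw [Real.mul_rpow (Real.rpow_nonneg hr0.le _) hw.le, ← Real.rpow_mul hr0.le]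
  have hdiv : μ / r^p = μ * r^(-p) := by
    rw [Real.rpow_neg hr0.le, div_eq_mul_inv]
  rw [hhh, h2r2, hv, hdiv]
  have hRHS : (r^(-p) * Hfun p μ γ ε K s / (1-s)^(p-1)) * (r^((-γ)*(p-1)) * (1-s)^(p-1))
      = r^(-p) * r^((-γ)*(p-1)) * Hfun p μ γ ε K s := by
    field_simp
  rw [hRHS]
  have m3 : r^(-p) * r^((-γ)*(p-1)) = r^(-p - γ*(p-1)) := by
    rw [← Real.rpow_add hr0]; congr 1; ring
  unfold Hfun
  rw [hK]
  have mψ : (γ-(γ+ε)*s)^(p-1) = (γ-(γ+ε)*s)^(p-2) * (γ-(γ+ε)*s) := by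
    rw [show p-1 = p-2+1 by ring]
    exact Real.rpow_add_one hψ.ne' _
  linear_combination
    (-((γ-(γ+ε)*s)^(p-2) * (((N:ℝ)-p-(p-1)*γ)*(γ-(γ+ε)*s) + (p-1)*(γ+ε)*ε*s))) * m3
    + (((N:ℝ)+p-2) * r^(-p - γ*(p-1))) * mψ

lemma rpow_neg_le_two_rpow (r c : ℝ) (hr : 1 ≤ r) (hc : 0 ≤ c) :
    r^(-c) ≤ 2^c * (1+r)^(-c) := by
  have hr0 : (0:ℝ) < r := lt_of_lt_of_le one_pos hr
  have h1r : (0:ℝ) < 1 + r := by linarith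
  have h2 : (1+r)^c ≤ 2^c * r^c := by
    rw [← Real.mul_rpow (by norm_num) hr0.le]
    exact Real.rpow_le_rpow h1r.le (by linarith) hc
  have h3 : (0:ℝ) < (1+r)^c := Real.rpow_pos_of_pos h1r _
  have h4 : (0:ℝ) < r^c := Real.rpow_pos_of_pos hr0 _
  rw [Real.rpow_neg hr0.le, Real.rpow_neg h1r.le, ← one_div, ← one_div,
    mul_one_div, div_le_div_iff₀ h4 h3]
  nlinarith [h2, h4]

lemma measurable_gradient_norm {N : ℕ} (f : EuclideanSpace ℝ (Fin N) → ℝ) :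
    Measurable (fun x => ‖gradient f x‖) := by
  have h1 : Measurable (fun x => gradient f x) := by
    unfold gradient
    exact (LinearIsometryEquiv.continuous _).measurable.comp (measurable_fderiv ℝ f)
  exact h1.norm

set_option maxHeartbeats 2000000 in
theorem supersolution_near_infinity (N : ℕ) (hN : 2 ≤ N) (p μ A α γ₂ : ℝ)
    (hp : 1 < p) (hpN : p < (N : ℝ)) (hμ0 : 0 ≤ μ) (hμ : μ < (((N : ℝ) - p) / p) ^ p)
    (hγ₂ : rootEq N p μ γ₂) (hγ₂gt : ((N : ℝ) - p) / p < γ₂)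
    (hγ₂le : γ₂ ≤ ((N : ℝ) - p) / (p - 1))
    (hA : 0 < A) (hα : p < α) :
    ∃ δ ε R₁ : ℝ, ∃ g : EuclideanSpace ℝ (Fin N) → ℝ,
      0 < δ ∧ δ < 1 ∧ 0 < ε ∧ ε < 1 ∧ 1 < R₁ ∧
      (∀ x : EuclideanSpace ℝ (Fin N), R₁ < ‖x‖ →
        0 < ‖x‖ ^ (-γ₂) * (1 - δ * ‖x‖ ^ (-ε))) ∧
      MemLp (fun x : EuclideanSpace ℝ (Fin N) => ‖x‖ ^ (-γ₂) * (1 - δ * ‖x‖ ^ (-ε)))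
        (ENNReal.ofReal ((N : ℝ) * p / ((N : ℝ) - p)))
        (volume.restrict {x : EuclideanSpace ℝ (Fin N) | R₁ < ‖x‖}) ∧
      MemLp (fun x : EuclideanSpace ℝ (Fin N) =>
          ‖gradient (fun y : EuclideanSpace ℝ (Fin N) =>
            ‖y‖ ^ (-γ₂) * (1 - δ * ‖y‖ ^ (-ε))) x‖)
        (ENNReal.ofReal p)
        (volume.restrict {x : EuclideanSpace ℝ (Fin N) | R₁ < ‖x‖}) ∧
      (∀ x : EuclideanSpace ℝ (Fin N), R₁ < ‖x‖ →
        -pLap N p (fun y : EuclideanSpace ℝ (Fin N) =>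
              ‖y‖ ^ (-γ₂) * (1 - δ * ‖y‖ ^ (-ε))) x -
            μ / ‖x‖ ^ p * (‖x‖ ^ (-γ₂) * (1 - δ * ‖x‖ ^ (-ε))) ^ (p - 1) =
          g x * (‖x‖ ^ (-γ₂) * (1 - δ * ‖x‖ ^ (-ε))) ^ (p - 1)) ∧
      (∀ x : EuclideanSpace ℝ (Fin N), R₁ < ‖x‖ → A * ‖x‖ ^ (-α) ≤ g x) ∧
      MemLp g (ENNReal.ofReal ((N : ℝ) / p))
        (volume.restrict {x : EuclideanSpace ℝ (Fin N) | R₁ < ‖x‖}) := by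
  have hp0 : (0:ℝ) < p := lt_trans one_pos hp
  have hN0 : (0:ℝ) < N := by positivity
  have hN2 : (2:ℝ) ≤ (N:ℝ) := by exact_mod_cast hN
  have hNp : (0:ℝ) < (N:ℝ) - p := by linarith
  have hγpos : 0 < γ₂ := lt_trans (by positivity) hγ₂gt
  have e2 : γ₂^(p-1) = γ₂^(p-2) * γ₂ := by
    rw [show p-1 = p-2+1 by ring]
    exact Real.rpow_add_one hγpos.ne' _
  have hμK : μ = γ₂^(p-1) * ((N:ℝ)-p-(p-1)*γ₂) := by
    unfold rootEq at hγ₂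
    linear_combination hγ₂ - ((N:ℝ)-p-(p-1)*γ₂) * e2
  have hK0 : 0 ≤ (N:ℝ)-p-(p-1)*γ₂ := by
    rw [le_div_iff₀ (by linarith : (0:ℝ) < p - 1)] at hγ₂le
    linarith
  have hKlt : (N:ℝ)-p-(p-1)*γ₂ < γ₂ := by
    rw [div_lt_iff₀ hp0] at hγ₂gt
    linarith
  set eps := min 1 (α-p) / 2 with hepsdef
  have hmin : 0 < min 1 (α-p) := lt_min one_pos (by linarith)
  have heps0 : 0 < eps := by rw [hepsdef]; positivity
  have heps1 : eps < 1 := by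
    have := min_le_left 1 (α-p); rw [hepsdef]; linarith
  have hepsα : p + eps < α := by
    have := min_le_right 1 (α-p); rw [hepsdef]; linarith
  obtain ⟨del, κ, hdel0, hdelhalf, hdelγ', hκ0, hHb⟩ :=
    Hfun_bounds p μ γ₂ eps ((N:ℝ)-p-(p-1)*γ₂) hp hγpos heps0 hK0 hKlt hμK
  have hδγ : del*(γ₂+eps) ≤ γ₂/2 := by rw [mul_comm]; exact hdelγ'
  set β := α - p - eps with hβdef
  have hβ0 : 0 < β := by rw [hβdef]; linarith
  have hκδ : 0 < κ * del := mul_pos hκ0 hdel0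
  set R₁ := 1 + max 1 ((A/(κ*del))^(β⁻¹)) with hR₁def
  have hR₁ : 1 < R₁ := by
    have := le_max_left (1:ℝ) ((A/(κ*del))^(β⁻¹))
    rw [hR₁def]; linarith
  set S := {x : EuclideanSpace ℝ (Fin N) | R₁ < ‖x‖} with hSdef
  have hS : MeasurableSet S := (isOpen_lt continuous_const continuous_norm).measurableSet
  set Gf : EuclideanSpace ℝ (Fin N) → ℝ := fun x =>
    ‖x‖^(-p) * Hfun p μ γ₂ eps ((N:ℝ)-p-(p-1)*γ₂) (del*‖x‖^(-eps))
      / (1 - del*‖x‖^(-eps))^(p-1) with hGfdef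
  set g : EuclideanSpace ℝ (Fin N) → ℝ :=
    ({x : EuclideanSpace ℝ (Fin N) | 1 < ‖x‖}).indicator Gf with hgdef
  -- pointwise facts
  have hfacts : ∀ x : EuclideanSpace ℝ (Fin N), R₁ < ‖x‖ →
      (1 < ‖x‖ ∧ 0 < del*‖x‖^(-eps) ∧ del*‖x‖^(-eps) ≤ del ∧ 1/2 ≤ 1 - del*‖x‖^(-eps)) := by
    intro x hx
    have hx1 : 1 < ‖x‖ := lt_trans hR₁ hx
    have hr0 : (0:ℝ) < ‖x‖ := lt_trans one_pos hx1
    have hrε : ‖x‖^(-eps) < 1 := Real.rpow_lt_one_of_one_lt_of_neg hx1 (by linarith)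
    have hrε0 : 0 < ‖x‖^(-eps) := Real.rpow_pos_of_pos hr0 _
    refine ⟨hx1, by positivity, ?_, ?_⟩
    · nlinarith
    · nlinarith
  have hgval : ∀ x : EuclideanSpace ℝ (Fin N), 1 < ‖x‖ → g x = Gf x := by
    intro x hx1
    rw [hgdef]
    exact Set.indicator_of_mem (show x ∈ {x : EuclideanSpace ℝ (Fin N) | 1 < ‖x‖} from hx1) Gf
  have hglow : ∀ x : EuclideanSpace ℝ (Fin N), R₁ < ‖x‖ →
      A * ‖x‖ ^ (-α) ≤ g x ∧ g x ≤ 3*κ*del*2^(p-1) * (‖x‖^(-p) * ‖x‖^(-eps)) := by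
    intro x hx
    obtain ⟨hx1, hs0, hsδ, hw2⟩ := hfacts x hx
    have hr0 : (0:ℝ) < ‖x‖ := lt_trans one_pos hx1
    have hw0 : 0 < 1 - del*‖x‖^(-eps) := by linarith
    have hwp : 0 < (1 - del*‖x‖^(-eps))^(p-1) := Real.rpow_pos_of_pos hw0 _
    have hwle1 : (1 - del*‖x‖^(-eps))^(p-1) ≤ 1 :=
      Real.rpow_le_one hw0.le (by linarith) (by linarith)
    obtain ⟨hHlow, hHup⟩ := hHb (del*‖x‖^(-eps)) hs0 hsδ
    have hrp : 0 < ‖x‖^(-p) := Real.rpow_pos_of_pos hr0 _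
    have hHpos : 0 < Hfun p μ γ₂ eps ((N:ℝ)-p-(p-1)*γ₂) (del*‖x‖^(-eps)) :=
      lt_of_lt_of_le (by positivity) hHlow
    rw [hgval x hx1, hGfdef]
    constructor
    · -- lower bound
      have step1 : ‖x‖^(-p) * Hfun p μ γ₂ eps ((N:ℝ)-p-(p-1)*γ₂) (del*‖x‖^(-eps))
          ≤ ‖x‖^(-p) * Hfun p μ γ₂ eps ((N:ℝ)-p-(p-1)*γ₂) (del*‖x‖^(-eps))
            / (1 - del*‖x‖^(-eps))^(p-1) := by
        rw [le_div_iff₀ hwp]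
        nlinarith [mul_pos hrp hHpos]
      have step2 : ‖x‖^(-p) * (κ * (del*‖x‖^(-eps)))
          ≤ ‖x‖^(-p) * Hfun p μ γ₂ eps ((N:ℝ)-p-(p-1)*γ₂) (del*‖x‖^(-eps)) :=
        mul_le_mul_of_nonneg_left hHlow hrp.le
      have step3 : A * ‖x‖ ^ (-α) ≤ ‖x‖^(-p) * (κ * (del*‖x‖^(-eps))) := by
        have h1 : (A/(κ*del))^(β⁻¹) ≤ ‖x‖ := by
          have h2 := le_max_right (1:ℝ) ((A/(κ*del))^(β⁻¹))
          rw [hR₁def] at hx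
          linarith
        have h3 : A/(κ*del) ≤ ‖x‖^β := by
          have h4 := Real.rpow_le_rpow (Real.rpow_nonneg (by positivity) _) h1 hβ0.le
          rwa [Real.rpow_inv_rpow (by positivity) hβ0.ne'] at h4
        have h5 : A ≤ κ*del*‖x‖^β := by
          rw [div_le_iff₀ hκδ] at h3
          linarith
        have h6 : ‖x‖^β * ‖x‖^(-α) = ‖x‖^(-p) * ‖x‖^(-eps) := by
          rw [rpow_merge _ _ _ (β + (-α)) hr0 rfl, rpow_merge _ _ _ ((-p) + (-eps)) hr0 rfl]
          congr 1
          rw [hβdef]; ring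
        have h7 : 0 < ‖x‖^(-α) := Real.rpow_pos_of_pos hr0 _
        calc A * ‖x‖ ^ (-α) ≤ (κ*del*‖x‖^β) * ‖x‖^(-α) :=
              mul_le_mul_of_nonneg_right h5 h7.le
          _ = κ*del*(‖x‖^β * ‖x‖^(-α)) := by ring
          _ = κ*del*(‖x‖^(-p) * ‖x‖^(-eps)) := by rw [h6]
          _ = ‖x‖^(-p) * (κ * (del*‖x‖^(-eps))) := by ring
      linarith
    · -- upper bound
      have hwge : (2^(p-1) : ℝ)⁻¹ ≤ (1 - del*‖x‖^(-eps))^(p-1) := by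
        have h1 : ((1:ℝ)/2)^(p-1) ≤ (1 - del*‖x‖^(-eps))^(p-1) :=
          Real.rpow_le_rpow (by norm_num) hw2 (by linarith)
        rwa [show (1:ℝ)/2 = 2⁻¹ by norm_num, Real.inv_rpow (by norm_num)] at h1
      have h2p : (0:ℝ) < 2^(p-1) := Real.rpow_pos_of_pos (by norm_num) _
      have step1 : ‖x‖^(-p) * Hfun p μ γ₂ eps ((N:ℝ)-p-(p-1)*γ₂) (del*‖x‖^(-eps))
            / (1 - del*‖x‖^(-eps))^(p-1)
          ≤ ‖x‖^(-p) * Hfun p μ γ₂ eps ((N:ℝ)-p-(p-1)*γ₂) (del*‖x‖^(-eps)) * 2^(p-1) := by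
        rw [div_le_iff₀ hwp]
        have hpos := mul_pos hrp hHpos
        have key : (1:ℝ) ≤ 2^(p-1) * (1 - del*‖x‖^(-eps))^(p-1) := by
          calc (1:ℝ) = 2^(p-1) * (2^(p-1))⁻¹ := by field_simp
            _ ≤ 2^(p-1) * (1 - del*‖x‖^(-eps))^(p-1) := mul_le_mul_of_nonneg_left hwge h2p.le
        nlinarith [mul_le_mul_of_nonneg_left key hpos.le]
      have step2 : ‖x‖^(-p) * Hfun p μ γ₂ eps ((N:ℝ)-p-(p-1)*γ₂) (del*‖x‖^(-eps)) * 2^(p-1)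
          ≤ ‖x‖^(-p) * (3*κ*(del*‖x‖^(-eps))) * 2^(p-1) := by
        have := mul_le_mul_of_nonneg_left hHup hrp.le
        nlinarith
      calc ‖x‖^(-p) * Hfun p μ γ₂ eps ((N:ℝ)-p-(p-1)*γ₂) (del*‖x‖^(-eps))
            / (1 - del*‖x‖^(-eps))^(p-1) ≤
          ‖x‖^(-p) * (3*κ*(del*‖x‖^(-eps))) * 2^(p-1) := le_trans step1 step2
        _ = 3*κ*del*2^(p-1) * (‖x‖^(-p) * ‖x‖^(-eps)) := by ring
  refine ⟨del, eps, R₁, g, hdel0, by linarith, heps0, heps1, hR₁, ?_, ?_, ?_, ?_, ?_, ?_⟩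
  · -- positivity
    intro x hx
    obtain ⟨hx1, hs0, hsδ, hw2⟩ := hfacts x hx
    have hr0 : (0:ℝ) < ‖x‖ := lt_trans one_pos hx1
    have := Real.rpow_pos_of_pos hr0 (-γ₂)
    nlinarith
  · -- MemLp of v
    apply memLp_of_bound S hS _
      ((by fun_prop : Measurable fun x : EuclideanSpace ℝ (Fin N) =>
        ‖x‖ ^ (-γ₂) * (1 - del * ‖x‖ ^ (-eps))).aestronglyMeasurable)
      ((N:ℝ)*p/((N:ℝ)-p)) γ₂ (2^γ₂) (by positivity)
    · have key : ((N:ℝ)-p)/p * ((N:ℝ)*p/((N:ℝ)-p)) = N := by field_simp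
      calc (N:ℝ) = ((N:ℝ)-p)/p * ((N:ℝ)*p/((N:ℝ)-p)) := key.symm
        _ < γ₂ * ((N:ℝ)*p/((N:ℝ)-p)) := by
            apply mul_lt_mul_of_pos_right hγ₂gt
            positivity
    · intro x hx
      obtain ⟨hx1, hs0, hsδ, hw2⟩ := hfacts x hx
      have hr0 : (0:ℝ) < ‖x‖ := lt_trans one_pos hx1
      have hvpos : 0 < ‖x‖ ^ (-γ₂) * (1 - del*‖x‖^(-eps)) := by
        have := Real.rpow_pos_of_pos hr0 (-γ₂)
        nlinarith
      rw [abs_of_pos hvpos]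
      have h1 : ‖x‖ ^ (-γ₂) * (1 - del*‖x‖^(-eps)) ≤ ‖x‖ ^ (-γ₂) := by
        have := Real.rpow_pos_of_pos hr0 (-γ₂)
        nlinarith
      have h2 := rpow_neg_le_two_rpow ‖x‖ γ₂ hx1.le hγpos.le
      linarith
  · -- MemLp of gradient
    apply memLp_of_bound S hS _ (measurable_gradient_norm _).aestronglyMeasurable
      p (γ₂+1) (γ₂ * 2^(γ₂+1)) hp0
    · rw [div_lt_iff₀ hp0] at hγ₂gt
      nlinarith
    · intro x hx
      obtain ⟨hx1, hs0, hsδ, hw2⟩ := hfacts x hx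
      have hr0 : (0:ℝ) < ‖x‖ := lt_trans one_pos hx1
      have h1t : (1:ℝ) ≤ ‖x‖^2 := by nlinarith
      have hΦ : 0 < Phi γ₂ del eps (‖x‖^2) := Phi_pos γ₂ del eps _ h1t hdel0.le hδγ hγpos heps0
      rw [abs_of_nonneg (norm_nonneg _), gradient_radial_eq γ₂ del eps x hx1]
      rw [norm_smul, Real.norm_eq_abs, abs_neg, abs_of_pos hΦ]
      have hb1 : Phi γ₂ del eps (‖x‖^2) ≤ γ₂ * ‖x‖^(-γ₂-2) := by
        unfold Phi
        have h1 : 0 ≤ del*(γ₂+eps) * (‖x‖^2)^(-((γ₂+eps)/2)-1) := by positivity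
        have h2 : ((‖x‖:ℝ)^2)^(-(γ₂/2)-1) = ‖x‖^(-γ₂-2) := by
          rw [sq_rpow _ _ hr0.le, show 2*(-(γ₂/2)-1) = -γ₂-2 by ring]
        rw [h2] at *
        linarith
      have hb2 : Phi γ₂ del eps (‖x‖^2) * ‖x‖ ≤ γ₂ * ‖x‖^(-(γ₂+1)) := by
        have h3 : ‖x‖^(-γ₂-2) * ‖x‖ = ‖x‖^(-(γ₂+1)) := by
          nth_rewrite 2 [show ‖x‖ = ‖x‖^(1:ℝ) from (Real.rpow_one _).symm]
          rw [rpow_merge _ _ _ (-(γ₂+1)) hr0 (by ring)]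
        calc Phi γ₂ del eps (‖x‖^2) * ‖x‖ ≤ (γ₂ * ‖x‖^(-γ₂-2)) * ‖x‖ :=
              mul_le_mul_of_nonneg_right hb1 (norm_nonneg _)
          _ = γ₂ * (‖x‖^(-γ₂-2) * ‖x‖) := by ring
          _ = γ₂ * ‖x‖^(-(γ₂+1)) := by rw [h3]
      have h4 := rpow_neg_le_two_rpow ‖x‖ (γ₂+1) hx1.le (by linarith)
      calc Phi γ₂ del eps (‖x‖^2) * ‖x‖ ≤ γ₂ * ‖x‖^(-(γ₂+1)) := hb2
        _ ≤ γ₂ * (2^(γ₂+1) * (1+‖x‖)^(-(γ₂+1))) := by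
            apply mul_le_mul_of_nonneg_left h4 hγpos.le
        _ = γ₂ * 2^(γ₂+1) * (1+‖x‖)^(-(γ₂+1)) := by ring
  · -- PDE
    intro x hx
    obtain ⟨hx1, hs0, hsδ, hw2⟩ := hfacts x hx
    rw [pLap_radial N p γ₂ del eps hγpos heps0 hdel0.le hδγ x hx1]
    rw [main_identity N p μ γ₂ eps ((N:ℝ)-p-(p-1)*γ₂) del ‖x‖ hp hγpos heps0 hdel0
      hδγ hdelhalf rfl hx1]
    rw [hgval x hx1]
  · -- lower bound on g
    intro x hx
    exact (hglow x hx).1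
  · -- MemLp of g
    apply memLp_of_bound S hS g ?_ ((N:ℝ)/p) (p+eps) (3*κ*del*2^(p-1)*2^(p+eps)) (by positivity)
    · have h1 : p * ((N:ℝ)/p) = N := by field_simp
      have h2 : 0 < eps * ((N:ℝ)/p) := by positivity
      nlinarith
    · intro x hx
      obtain ⟨hx1, hs0, hsδ, hw2⟩ := hfacts x hx
      have hr0 : (0:ℝ) < ‖x‖ := lt_trans one_pos hx1
      obtain ⟨hg1, hg2⟩ := hglow x hx
      have hgpos : 0 ≤ g x := le_trans (by positivity) hg1
      rw [abs_of_nonneg hgpos]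
      have h6 : ‖x‖^(-p) * ‖x‖^(-eps) = ‖x‖^(-(p+eps)) :=
        rpow_merge _ _ _ _ hr0 (by ring)
      have h7 := rpow_neg_le_two_rpow ‖x‖ (p+eps) hx1.le (by positivity)
      calc g x ≤ 3*κ*del*2^(p-1) * (‖x‖^(-p) * ‖x‖^(-eps)) := hg2
        _ = 3*κ*del*2^(p-1) * ‖x‖^(-(p+eps)) := by rw [h6]
        _ ≤ 3*κ*del*2^(p-1) * (2^(p+eps) * (1+‖x‖)^(-(p+eps))) := by
            apply mul_le_mul_of_nonneg_left h7 (by positivity)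
        _ = 3*κ*del*2^(p-1)*2^(p+eps) * (1+‖x‖)^(-(p+eps)) := by ring
    · rw [hgdef]
      apply Measurable.aestronglyMeasurable
      apply Measurable.indicator
      · rw [hGfdef]
        simp only [Hfun]
        fun_prop
      · exact (isOpen_lt continuous_const continuous_norm).measurableSet
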